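/- Let [a,b] be a segment with b > a and m a multisegment in good range for [a,b]. For all sufficiently large r ∈ ℤ_{>0}, the following are equivalent: (i) |I_{[a]}(m)| = |m|; (ii) D^{Lang,L}_{[a]}(𝔻_r(m)) ≠ ∞; (iii) D^{Lang,L}_{[a]}(𝔻_r^{[a,b]}(m)) ≠ ∞. -/

import Mathlib

namespace Multiseg

/-- A segment `[a,b]` on a fixed cuspidal line, encoded by its endpoints. -/
abbrev Seg := ℤ × ℤ

/-- A multiset of pairs is a multisegment when each pair is a genuine segment. -/
def IsMS (m : Multiset Seg) : Prop := ∀ Δ ∈ m, Δ.1 ≤ Δ.2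

/-- `Δ ≺ Δ'` : the segment `Δ` precedes `Δ'`. -/
def Prec (Δ Δ' : Seg) : Prop := Δ.1 < Δ'.1 ∧ Δ.2 < Δ'.2 ∧ Δ'.1 ≤ Δ.2 + 1

instance : DecidableRel Prec := fun _ _ => by unfold Prec; infer_instance

/-- `Δ ⊆ Δ'` as segments. -/
def SSub (Δ Δ' : Seg) : Prop := Δ'.1 ≤ Δ.1 ∧ Δ.2 ≤ Δ'.2

/-- `m[i]`, the segments of `m` starting at `i`. -/
def startAt (m : Multiset Seg) (i : ℤ) : Multiset Seg := m.filter fun Δ => Δ.1 = i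

/-- `m⟨i⟩`, the segments of `m` ending at `i`. -/
def endAt (m : Multiset Seg) (i : ℤ) : Multiset Seg := m.filter fun Δ => Δ.2 = i

/-- `m_{[a,b]} = {[a',b'] ∈ m : a ≤ a' ≤ b+1 ≤ b'+1}`. -/
def mRange (m : Multiset Seg) (a b : ℤ) : Multiset Seg :=
  m.filter fun Δ => a ≤ Δ.1 ∧ Δ.1 ≤ b + 1 ∧ b ≤ Δ.2

/-- Add the segment `[x,y]` to `m`, discarding it if it is void. -/
def pushSeg (m : Multiset Seg) (x y : ℤ) : Multiset Seg :=
  if x ≤ y then m + {(x, y)} else m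

def msetMax (s : Multiset ℤ) : Option ℤ :=
  if h : s = 0 then none else some (s.toFinset.max' (Multiset.toFinset_nonempty.mpr h))

def msetMin (s : Multiset ℤ) : Option ℤ :=
  if h : s = 0 then none else some (s.toFinset.min' (Multiset.toFinset_nonempty.mpr h))

/-- The longest segment of `m[i]`, if any. -/
def longStart (m : Multiset Seg) (i : ℤ) : Option Seg :=
  (msetMax ((startAt m i).map Prod.snd)).map fun y => (i, y)

/-- The shortest segment of `m[i]`, if any. -/
def shortStart (m : Multiset Seg) (i : ℤ) : Option Seg :=
  (msetMin ((startAt m i).map Prod.snd)).map fun y => (i, y)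

/-- The longest segment of `m⟨i⟩`, if any. -/
def longEnd (m : Multiset Seg) (i : ℤ) : Option Seg :=
  (msetMin ((endAt m i).map Prod.fst)).map fun x => (x, i)

/-- The shortest segment of `m⟨i⟩`, if any. -/
def shortEnd (m : Multiset Seg) (i : ℤ) : Option Seg :=
  (msetMax ((endAt m i).map Prod.fst)).map fun x => (x, i)

/-- One removal step of the `tds(·,c)` process: remove the longest segment `Δ''`
of `m[c+1]` and the longest segment `Δ'` of `m[c]` with `Δ' ≺ Δ''`. -/
def tdsStep (m : Multiset Seg) (c : ℤ) : Option (Multiset Seg) :=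
  match longStart m (c + 1) with
  | none => none
  | some Δ'' =>
    match msetMax (((startAt m c).filter fun Δ => Prec Δ Δ'').map Prod.snd) with
    | none => none
    | some y => some ((m.erase (c, y)).erase Δ'')

def tdsIterF (c : ℤ) : ℕ → Multiset Seg → Multiset Seg
  | 0, m => m
  | n + 1, m =>
    match tdsStep m c with
    | none => m
    | some m' => tdsIterF c n m'

/-- Iterate the `tds(·,c)` process until it terminates. -/
def tdsIter (c : ℤ) (m : Multiset Seg) : Multiset Seg := tdsIterF c m.card m

/-- The `ρ`-derivative algorithm `𝒟_{[a]}`; the value `none` codes `∞`. -/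
def Drho (a : ℤ) (m : Multiset Seg) : Option (Multiset Seg) :=
  (shortStart (tdsIter a m) a).map fun Δ => pushSeg (m.erase Δ) (a + 1) Δ.2

/-- `ε_{[a]}(m)`, the number of segments starting at `a` left after the
`tds(·,a)` process terminates. -/
def epsA (a : ℤ) (m : Multiset Seg) : ℕ := (startAt (tdsIter a m) a).card

/-- The next element of an upward sequence after `p`. -/
def usNext (n : Multiset Seg) (p : Seg) : Option Seg :=
  match msetMin ((n.filter fun Δ => Prec p Δ).map Prod.fst) with
  | none => none
  | some aj =>
    (msetMax ((((n.filter fun Δ => Prec p Δ).filter fun Δ => Δ.1 = aj)).map Prod.snd)).map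
      fun y => (aj, y)

def usAux (n : Multiset Seg) : ℕ → Seg → List Seg
  | 0, _ => []
  | fuel + 1, p =>
    match usNext n p with
    | none => []
    | some Δ => Δ :: usAux n fuel Δ

/-- The upward sequence `Us(n)` of maximally linked segments of `n`. -/
def usList (n : Multiset Seg) : List Seg :=
  match msetMin (n.map Prod.fst) with
  | none => []
  | some a1 =>
    match longStart n a1 with
    | none => []
    | some Δ1 => Δ1 :: usAux n n.card Δ1

/-- The decomposition of a multisegment into successive upward sequences. -/
def usDecomp : ℕ → Multiset Seg → List (List Seg)
  | 0, _ => []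
  | fuel + 1, n =>
    if n = 0 then [] else usList n :: usDecomp fuel (n - (usList n : Multiset Seg))

/-- `[x,y] ⊆ [u,v]` (with the void interval contained in anything). -/
def intSubB (x y u v : ℤ) : Bool := decide (y < x) || (decide (u ≤ x) && decide (y ≤ v))

/-- Find, in a row of an upward-sequence decomposition, the first segment `Δ`
whose removable free section contains `[s(Δ), top]`. -/
def findRowD : List Seg → ℤ → Option Seg
  | [], _ => none
  | [Δ], top => if intSubB Δ.1 top Δ.1 Δ.2 then some Δ else none
  | Δ :: Δ' :: rest, top =>
    if intSubB Δ.1 top Δ.1 (Δ'.1 - 2) then some Δ else findRowD (Δ' :: rest) top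

/-- The selection step of the Langlands derivative algorithm, scanning the rows
downwards from the last one; it records each selected segment together with the
start of its truncation. -/
def selAuxD (rows : List (List Seg)) : ℕ → ℤ → List (Seg × ℤ)
  | 0, _ => []
  | n + 1, top =>
    match findRowD (rows.getD n []) top with
    | some Δ => (Δ, top + 1) :: selAuxD rows n (Δ.1 - 1)
    | none => selAuxD rows n top

/-- The Langlands derivative algorithm `𝒟^Lang_{[a,b]}`; `none` codes `∞`. -/
def DLang (a b : ℤ) (m : Multiset Seg) : Option (Multiset Seg) :=
  let m1 := mRange m a b
  let rows := usDecomp m1.card m1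
  let sel := selAuxD rows rows.length b
  match sel.getLast? with
  | none => none
  | some (Δl, _) =>
    if Δl.1 = a then
      some (sel.foldl (fun acc p => pushSeg (acc.erase p.1) p.2 p.1.2) m)
    else none

/-- One removal step of the `tus(·,c)` process. -/
def tusStep (n : Multiset Seg) (c : ℤ) : Option (Multiset Seg) :=
  match shortStart n c with
  | none => none
  | some Δ' =>
    match msetMin (((startAt n (c + 1)).filter fun Δ => Prec Δ' Δ).map Prod.snd) with
    | none => none
    | some y => some ((n.erase Δ').erase (c + 1, y))

def tusIterF (c : ℤ) : ℕ → Multiset Seg → Multiset Seg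
  | 0, n => n
  | k + 1, n =>
    match tusStep n c with
    | none => n
    | some n' => tusIterF c k n'

/-- Iterate the `tus(·,c)` process until it terminates. -/
def tusIter (c : ℤ) (n : Multiset Seg) : Multiset Seg := tusIterF c n.card n

/-- The `ρ`-integral algorithm `ℐ_{[a]}` (always defined). -/
def Irho (a : ℤ) (n : Multiset Seg) : Multiset Seg :=
  match longStart (tusIter a n) (a + 1) with
  | none => n + {(a, a)}
  | some Δ => pushSeg (n.erase Δ) a Δ.2

/-- The next element of a downward sequence after `p`. -/
def dsNext (n : Multiset Seg) (p : Seg) : Option Seg :=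
  match msetMax ((n.filter fun Δ => Prec Δ p).map Prod.fst) with
  | none => none
  | some aq => shortStart n aq

def dsAux (n : Multiset Seg) : ℕ → Seg → List Seg
  | 0, _ => []
  | k + 1, p =>
    match dsNext n p with
    | none => []
    | some Δ => Δ :: dsAux n k Δ

/-- The downward sequence `Ds(n)` of minimal linked segments with the largest
starting. -/
def dsList (n : Multiset Seg) : List Seg :=
  match msetMax (n.map Prod.fst) with
  | none => []
  | some a1 =>
    match shortStart n a1 with
    | none => []
    | some Δ1 => Δ1 :: dsAux n n.card Δ1

/-- The decomposition of a multisegment into successive downward sequences. -/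
def dsDecomp : ℕ → Multiset Seg → List (List Seg)
  | 0, _ => []
  | k + 1, n =>
    if n = 0 then [] else dsList n :: dsDecomp k (n - (dsList n : Multiset Seg))

/-- Find, in a row of a downward-sequence decomposition, the segment whose set
of addable free points contains `pt`. -/
def findRowI (a : ℤ) : List Seg → ℤ → Option Seg
  | [], _ => none
  | [Δ], pt => if decide (a ≤ pt) && decide (pt ≤ Δ.1 - 1) then some Δ else none
  | Δ :: Δ' :: rest, pt =>
    if decide (Δ'.1 + 1 ≤ pt) && decide (pt ≤ Δ.1 - 1) then some Δ
    else findRowI a (Δ' :: rest) pt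

/-- The selection step of the Langlands integral algorithm; it records each
selected segment together with the start of its extension. -/
def selAuxI (a : ℤ) (rows : List (List Seg)) : ℕ → ℤ → List (Seg × ℤ)
  | 0, _ => []
  | n + 1, pt =>
    match findRowI a (rows.getD n []) pt with
    | some Δ => (Δ, pt) :: selAuxI a rows n Δ.1
    | none => selAuxI a rows n pt

/-- The Langlands integral algorithm `ℐ^Lang_{[a,b]}`. -/
def ILang (a b : ℤ) (m : Multiset Seg) : Multiset Seg :=
  let m1 := mRange m a b
  let rows := dsDecomp m1.card m1
  let sel := selAuxI a rows rows.length a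
  let base := sel.foldl (fun acc p => pushSeg (acc.erase p.1) p.2 p.1.2) m
  match sel.getLast? with
  | none => pushSeg base a b
  | some (Δl, _) => pushSeg base Δl.1 b

/-- `m` is in good range for `[a,b]`. -/
def GoodRange (m : Multiset Seg) (a b : ℤ) : Prop := mRange m a b = m

/-- `Θ`, the Gelfand–Kazhdan involution on multisegments. -/
def Theta (m : Multiset Seg) : Multiset Seg := m.map fun Δ => (-Δ.2, -Δ.1)

/-- The exotic duality `𝔻_r`. -/
def Dual (r : ℤ) (m : Multiset Seg) : Multiset Seg :=
  m.map fun Δ => (-r + Δ.2 + 1, Δ.1 - 1)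

/-- `𝔻_r^{[a,b]}`. -/
def DualAB (r a b : ℤ) (m : Multiset Seg) : Multiset Seg := Dual r m + {(b - r + 1, b)}

/-- The left Langlands derivative algorithm `𝒟^{Lang,L}_{[a,b]}`. -/
def DLangL (a b : ℤ) (m : Multiset Seg) : Option (Multiset Seg) :=
  (DLang (-b) (-a) (Theta m)).map Theta

/-- The left `ρ`-derivative algorithm `𝒟^{Lang,L}_{[a]}`. -/
def DrhoL (a : ℤ) (m : Multiset Seg) : Option (Multiset Seg) :=
  (Drho (-a) (Theta m)).map Theta

/-- The next segment chosen by the MW algorithm after `p`. -/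
def mwNext (m : Multiset Seg) (p : Seg) : Option Seg :=
  (msetMax (((endAt m (p.2 - 1)).filter fun Δ => Prec Δ p).map Prod.fst)).map
    fun x => (x, p.2 - 1)

def mwAux (m : Multiset Seg) : ℕ → Seg → List Seg
  | 0, _ => []
  | k + 1, p =>
    match mwNext m p with
    | none => []
    | some Δ => Δ :: mwAux m k Δ

/-- The ordered segments participating in the MW algorithm for `m`. -/
def mwList (m : Multiset Seg) : List Seg :=
  match msetMax (m.map Prod.snd) with
  | none => []
  | some b0 =>
    match shortEnd m b0 with
    | none => []
    | some Δ0 => Δ0 :: mwAux m m.card Δ0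

/-- `𝒟^MW(m)`. -/
def DMW (m : Multiset Seg) : Multiset Seg :=
  (mwList m).foldl (fun acc Δ => pushSeg (acc.erase Δ) Δ.1 (Δ.2 - 1)) m

/-- The first segment `Δ(m)` produced by the MW algorithm for `m`. -/
def mwFirstSeg (m : Multiset Seg) : Option Seg :=
  match (mwList m).head?, (mwList m).getLast? with
  | some Δ0, some Δk => some (Δk.1, Δ0.2)
  | _, _ => none

/-- The total relative length of a multisegment. -/
def totalLen (m : Multiset Seg) : ℕ := (m.map fun Δ => (Δ.2 - Δ.1 + 1).toNat).sum

def sharpAux : ℕ → Multiset Seg → Multiset Seg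
  | 0, _ => 0
  | k + 1, m =>
    if m = 0 then 0
    else
      match mwFirstSeg m with
      | none => 0
      | some Δ => Δ ::ₘ sharpAux k (DMW m)

/-- The Mœglin–Waldspurger involution `m^#`. -/
def msharp (m : Multiset Seg) : Multiset Seg := sharpAux (totalLen m) m

/-- `ε^MW_{[a,c]}(m)`, the multiplicity of `[a,c]` in `m^#`. -/
def epsMW (a c : ℤ) (m : Multiset Seg) : ℕ := (msharp m).count (a, c)

/-- `m_i`: remove from `m` the participants of the first `i` runs of the MW
algorithm. -/
def mwStage (m : Multiset Seg) : ℕ → Multiset Seg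
  | 0 => m
  | i + 1 => mwStage m i - (mwList (DMW^[i] m) : Multiset Seg)

/-- `MW_k(m)`: all segments ending at `k` participating in the first `r` runs
of the MW algorithm. -/
def MWkSet (m : Multiset Seg) (r : ℕ) (k : ℤ) : Multiset Seg :=
  ∑ i ∈ Finset.range r, (mwList (DMW^[i] m) : Multiset Seg).filter fun Δ => Δ.2 = k

def upNbrAux (m : Multiset Seg) : ℕ → Seg → Option (List Seg)
  | 0, p => some [p]
  | k + 1, p =>
    match msetMin (((endAt m (p.2 + 1)).filter fun Δ => Prec p Δ).map Prod.fst) with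
    | none => none
    | some x => (upNbrAux m k (x, p.2 + 1)).map fun l => p :: l

/-- The removal upward sequence of maximal linked segments in neighbors on `m`
ranging from `a-1` to `b` (if it exists). -/
def upSeqNbr (m : Multiset Seg) (a b : ℤ) : Option (List Seg) :=
  match longEnd m (a - 1) with
  | none => none
  | some Δ => upNbrAux m (b - (a - 1)).toNat Δ

def zelRemF (a b : ℤ) : ℕ → Multiset Seg → Multiset Seg
  | 0, m => m
  | k + 1, m =>
    match upSeqNbr m a b with
    | none => m
    | some l => zelRemF a b k (m - (l : Multiset Seg))

/-- Repeatedly remove removal upward sequences of maximal linked segments in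
neighbors ranging from `a-1` to `b`, until none exists. -/
def zelRem (a b : ℤ) (m : Multiset Seg) : Multiset Seg := zelRemF a b m.card m

def zelRemCountF (a b : ℤ) : ℕ → Multiset Seg → ℕ
  | 0, _ => 0
  | k + 1, m =>
    match upSeqNbr m a b with
    | none => 0
    | some l => zelRemCountF a b k (m - (l : Multiset Seg)) + 1

/-- The number of removal upward sequences of maximal linked segments in
neighbors ranging from `a-1` to `b` successively removed from `m`. -/
def zelRemCount (a b : ℤ) (m : Multiset Seg) : ℕ := zelRemCountF a b m.card m

def downNbrAux (m : Multiset Seg) : ℕ → Seg → Option (List Seg)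
  | 0, p => some [p]
  | k + 1, p =>
    match msetMax (((endAt m (p.2 - 1)).filter fun Δ => Prec Δ p).map Prod.fst) with
    | none => none
    | some x => (downNbrAux m k (x, p.2 - 1)).map fun l => p :: l

/-- The Zelevinsky derivative algorithm `𝒟^Zel_{[a,b]}`; `none` codes `∞`. -/
def DZel (a b : ℤ) (m : Multiset Seg) : Option (Multiset Seg) :=
  match shortEnd (zelRem a b m) b with
  | none => none
  | some Δb =>
    match downNbrAux (zelRem a b m) (b - a).toNat Δb with
    | none => none
    | some l => some (l.foldl (fun acc Δ => pushSeg (acc.erase Δ) Δ.1 (Δ.2 - 1)) m)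

/-- The downward sequence of minimal linked segments in neighbors on `m`
ranging from `b` to `a-1` (if it exists). -/
def downSeqNbr (m : Multiset Seg) (a b : ℤ) : Option (List Seg) :=
  match shortEnd m b with
  | none => none
  | some Δ => downNbrAux m (b - (a - 1)).toNat Δ

def izRemF (a b : ℤ) : ℕ → Multiset Seg → Multiset Seg
  | 0, m => m
  | k + 1, m =>
    match downSeqNbr m a b with
    | none => m
    | some l => izRemF a b k (m - (l : Multiset Seg))

/-- Repeatedly remove downward sequences of minimal linked segments in
neighbors ranging from `b` to `a-1`, until none exists. -/
def izRem (a b : ℤ) (m : Multiset Seg) : Multiset Seg := izRemF a b m.card m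

def extNext (m : Multiset Seg) (p : Seg) : Option Seg :=
  (msetMin (((endAt m (p.2 + 1)).filter fun Δ => Prec p Δ).map Prod.fst)).map
    fun x => (x, p.2 + 1)

def extAux (m : Multiset Seg) : ℕ → Option Seg → List (Option Seg)
  | 0, _ => []
  | k + 1, p =>
    let cur := p.bind (extNext m)
    cur :: extAux m k cur

/-- The (possibly void) segments `Δ̃_{a-1}, …, Δ̃_{b-1}` participating in the
extension process of the Zelevinsky integral algorithm on `m`. -/
def extList (m : Multiset Seg) (a b : ℤ) : List (Option Seg) :=
  longEnd m (a - 1) :: extAux m (b - a).toNat (longEnd m (a - 1))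

def applyExt : Multiset Seg → ℤ → List (Option Seg) → Multiset Seg
  | acc, _, [] => acc
  | acc, i, some Δ :: rest => applyExt (pushSeg (acc.erase Δ) Δ.1 (Δ.2 + 1)) (i + 1) rest
  | acc, i, none :: rest => applyExt (acc + {(i + 1, i + 1)}) (i + 1) rest

/-- The Zelevinsky integral algorithm `ℐ^Zel_{[a,b]}`. -/
def IZel (a b : ℤ) (m : Multiset Seg) : Multiset Seg :=
  applyExt m (a - 1) (extList (izRem a b m) a b)

/-- `Δ̃⁺` for a possibly void `Δ̃` at position `i` (for the void segment at
position `i` this is the singleton `[i+1,i+1]`). -/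
def plusAt (i : ℤ) : Option Seg → Seg
  | some Δ => (Δ.1, Δ.2 + 1)
  | none => (i + 1, i + 1)

def plusList : ℤ → List (Option Seg) → List Seg
  | _, [] => []
  | i, o :: rest => plusAt i o :: plusList (i + 1) rest

/-- `n₁` and `n₂` are linked by mapping: there is an injective map `f : n₁ → n₂`
with `Δ ≺ f(Δ)` for all `Δ ∈ n₁`. -/
def LinkedByMapping (n₁ n₂ : Multiset Seg) : Prop :=
  ∃ n₂' ≤ n₂, Multiset.Rel Prec n₁ n₂'

def startsSorted (n : Multiset Seg) : List ℤ := (n.map Prod.fst).sort (· ≤ ·)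

/-- `n₁' < n₁` for multisegments of segments ending at a common point, compared
via their sorted lists of starting points. -/
def MSLtStarts (n₁' n₁ : Multiset Seg) : Prop :=
  startsSorted n₁' ≠ startsSorted n₁ ∧
    List.Forall₂ (· ≤ ·) (startsSorted n₁) (startsSorted n₁')

/-- `n₁ ⊆ m⟨k-1⟩` and `n₂ ⊆ m⟨k⟩` are minimally linked in `m`. -/
def MinLinked (m : Multiset Seg) (k : ℤ) (n₁ n₂ : Multiset Seg) : Prop :=
  n₁ ≤ endAt m (k - 1) ∧ n₂ ≤ endAt m k ∧ LinkedByMapping n₁ n₂ ∧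
    (∀ n₁' ≤ endAt m (k - 1), LinkedByMapping n₁' n₂ → n₁'.card ≤ n₁.card) ∧
    (∀ n₁' ≤ endAt m (k - 1), n₁'.card = n₁.card → MSLtStarts n₁' n₁ →
      ¬LinkedByMapping n₁' n₂)

/-- The non-free sections of a row of an upward-sequence decomposition. -/
def nfRow : List Seg → Multiset Seg
  | [] => 0
  | [_] => 0
  | Δ :: Δ' :: rest => pushSeg (nfRow (Δ' :: rest)) (Δ'.1 - 1) Δ.2

/-- `𝔡(m)`, the sum of all non-free sections. -/
def frakd (m : Multiset Seg) : Multiset Seg :=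
  (usDecomp m.card m).foldl (fun acc row => acc + nfRow row) 0

def DrhoPow (t : ℤ) : ℕ → Multiset Seg → Option (Multiset Seg)
  | 0, m => some m
  | k + 1, m => (Drho t m).bind (DrhoPow t k)

/-- `(𝒟_{[a+n-1]})^{ε_{a+n-1}} ∘ ⋯ ∘ (𝒟_{[a]})^{ε_a}(m)` where at each stage `t`
the exponent is `ε_t = ε_{[t]}` of the current multisegment; `none` codes that
some derivative in the composition is `∞`. -/
def hdComp : ℕ → ℤ → Multiset Seg → Option (Multiset Seg)
  | 0, _, m => some m
  | k + 1, t, m =>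
    match DrhoPow t (epsA t m) m with
    | none => none
    | some m' => hdComp k (t + 1) m'



section Stmt8Aux

lemma msetMax_eq_none {s : Multiset ℤ} : msetMax s = none ↔ s = 0 := by
  unfold msetMax; split <;> simp_all

lemma msetMin_eq_none {s : Multiset ℤ} : msetMin s = none ↔ s = 0 := by
  unfold msetMin; split <;> simp_all

lemma mem_of_msetMax {s : Multiset ℤ} {y : ℤ} (h : msetMax s = some y) : y ∈ s := by
  unfold msetMax at h
  split at h
  · exact absurd h (by simp)
  · rw [Option.some_inj] at h
    subst h
    exact Multiset.mem_toFinset.mp (Finset.max'_mem _ _)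

lemma mem_of_msetMin {s : Multiset ℤ} {y : ℤ} (h : msetMin s = some y) : y ∈ s := by
  unfold msetMin at h
  split at h
  · exact absurd h (by simp)
  · rw [Option.some_inj] at h
    subst h
    exact Multiset.mem_toFinset.mp (Finset.min'_mem _ _)

lemma msetMax_map_neg (r : ℤ) (s : Multiset ℤ) :
    msetMax (s.map fun x => r - x - 1) = (msetMin s).map fun x => r - x - 1 := by
  unfold msetMax msetMin
  by_cases h : s = 0
  · subst h; simp
  · have h' : s.map (fun x => r - x - 1) ≠ 0 := by simpa using h
    rw [dif_neg h, dif_neg h', Option.map_some]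
    congr 1
    apply le_antisymm
    · apply Finset.max'_le
      intro y hy
      rw [Multiset.mem_toFinset, Multiset.mem_map] at hy
      obtain ⟨x, hx, rfl⟩ := hy
      have := Finset.min'_le s.toFinset x (Multiset.mem_toFinset.mpr hx)
      omega
    · apply Finset.le_max'
      rw [Multiset.mem_toFinset, Multiset.mem_map]
      exact ⟨_, Multiset.mem_toFinset.mp (Finset.min'_mem _ _), rfl⟩

/-- The dual segment map underlying `Θ ∘ 𝔻_r`. -/
def dphi (r : ℤ) (Δ : Seg) : Seg := (1 - Δ.1, r - Δ.2 - 1)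

lemma dphi_inj (r : ℤ) : Function.Injective (dphi r) := by
  intro Δ₁ Δ₂ h
  simp only [dphi, Prod.mk.injEq] at h
  rw [Prod.ext_iff]
  omega

lemma theta_dual (r : ℤ) (m : Multiset Seg) : Theta (Dual r m) = m.map (dphi r) := by
  unfold Theta Dual
  rw [Multiset.map_map]
  apply Multiset.map_congr rfl
  intro Δ _
  simp only [Function.comp_apply, dphi, Prod.mk.injEq]
  constructor <;> ring

lemma startAt_map_dphi (r : ℤ) (n : Multiset Seg) (i : ℤ) :
    startAt (n.map (dphi r)) i = (startAt n (1 - i)).map (dphi r) := by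
  unfold startAt
  rw [Multiset.filter_map]
  exact congrArg _ (Multiset.filter_congr fun Δ _ => by
    simp only [Function.comp_apply, dphi]; omega)

lemma map_snd_dphi (r : ℤ) (s : Multiset Seg) :
    (s.map (dphi r)).map Prod.snd = (s.map Prod.snd).map fun x => r - x - 1 := by
  rw [Multiset.map_map, Multiset.map_map]
  rfl

lemma longStart_map_dphi (r : ℤ) (n : Multiset Seg) (i : ℤ) :
    longStart (n.map (dphi r)) i = (shortStart n (1 - i)).map (dphi r) := by
  unfold longStart shortStart
  rw [startAt_map_dphi, map_snd_dphi, msetMax_map_neg]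
  cases msetMin ((startAt n (1 - i)).map Prod.snd) with
  | none => rfl
  | some y =>
    simp only [Option.map_some, dphi]
    rw [Option.some_inj, Prod.mk.injEq]
    constructor <;> ring

lemma longStart_eq_none {n : Multiset Seg} {i : ℤ} :
    longStart n i = none ↔ startAt n i = 0 := by
  unfold longStart
  rw [Option.map_eq_none_iff, msetMax_eq_none, Multiset.map_eq_zero]

lemma shortStart_eq_none {n : Multiset Seg} {i : ℤ} :
    shortStart n i = none ↔ startAt n i = 0 := by
  unfold shortStart
  rw [Option.map_eq_none_iff, msetMin_eq_none, Multiset.map_eq_zero]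

lemma shortStart_mem {n : Multiset Seg} {i : ℤ} {Δ : Seg} (h : shortStart n i = some Δ) :
    Δ ∈ n ∧ Δ.1 = i := by
  unfold shortStart at h
  cases hm : msetMin ((startAt n i).map Prod.snd) with
  | none => rw [hm] at h; exact absurd h (by simp)
  | some y =>
    rw [hm, Option.map_some, Option.some_inj] at h
    obtain ⟨Δ₀, hΔ₀, hy⟩ := Multiset.mem_map.mp (mem_of_msetMin hm)
    simp only [startAt, Multiset.mem_filter] at hΔ₀
    have hΔ₀e : Δ₀ = Δ := by rw [← h, Prod.ext_iff]; exact ⟨hΔ₀.2, hy⟩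
    rw [← hΔ₀e]
    exact ⟨hΔ₀.1, hΔ₀.2⟩

lemma longStart_mem {n : Multiset Seg} {i : ℤ} {Δ : Seg} (h : longStart n i = some Δ) :
    Δ ∈ n ∧ Δ.1 = i := by
  unfold longStart at h
  cases hm : msetMax ((startAt n i).map Prod.snd) with
  | none => rw [hm] at h; exact absurd h (by simp)
  | some y =>
    rw [hm, Option.map_some, Option.some_inj] at h
    obtain ⟨Δ₀, hΔ₀, hy⟩ := Multiset.mem_map.mp (mem_of_msetMax hm)
    simp only [startAt, Multiset.mem_filter] at hΔ₀
    have hΔ₀e : Δ₀ = Δ := by rw [← h, Prod.ext_iff]; exact ⟨hΔ₀.2, hy⟩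
    rw [← hΔ₀e]
    exact ⟨hΔ₀.1, hΔ₀.2⟩

lemma tdsStep_dual (r a : ℤ) (n : Multiset Seg)
    (h1 : ∀ Δ ∈ n, Δ.2 + 1 - a ≤ r) (h2 : ∀ Δ ∈ n, a ≤ Δ.2) :
    tdsStep (n.map (dphi r)) (-a) = (tusStep n a).map (Multiset.map (dphi r)) := by
  unfold tdsStep tusStep
  rw [longStart_map_dphi]
  have ea : (1 : ℤ) - (-a + 1) = a := by ring
  rw [ea]
  cases hss : shortStart n a with
  | none => rfl
  | some Δ' =>
    obtain ⟨hΔ'mem, hΔ'1⟩ := shortStart_mem hss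
    simp only [Option.map_some]
    have key : (((startAt (n.map (dphi r)) (-a)).filter fun Δ => Prec Δ (dphi r Δ')).map
          Prod.snd)
        = ((((startAt n (a+1)).filter fun Δ => Prec Δ' Δ)).map Prod.snd).map
          fun x => r - x - 1 := by
      rw [startAt_map_dphi]
      have h1a : (1 : ℤ) - -a = a + 1 := by ring
      rw [h1a, Multiset.filter_map, map_snd_dphi]
      refine congrArg _ (congrArg _ (Multiset.filter_congr ?_))
      intro Δ hΔ
      simp only [startAt, Multiset.mem_filter] at hΔ
      have hb := h1 Δ hΔ.1
      have ha' := h2 Δ' hΔ'mem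
      simp only [Function.comp_apply, Prec, dphi]
      omega
    rw [key, msetMax_map_neg]
    cases hmin : msetMin (((startAt n (a+1)).filter fun Δ => Prec Δ' Δ).map Prod.snd) with
    | none => rfl
    | some y =>
      simp only [Option.map_some]
      congr 1
      have hphi : dphi r (a + 1, y) = (-a, r - y - 1) := by
        simp only [dphi, Prod.mk.injEq]
        exact ⟨by ring, trivial⟩
      rw [Multiset.map_erase _ (dphi_inj r), Multiset.map_erase _ (dphi_inj r), hphi,
        Multiset.erase_comm]

lemma tusStep_subset {a : ℤ} {n n' : Multiset Seg} (h : tusStep n a = some n') :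
    ∀ Δ ∈ n', Δ ∈ n := by
  unfold tusStep at h
  split at h
  · exact absurd h (by simp)
  · split at h
    · exact absurd h (by simp)
    · rw [Option.some_inj] at h
      subst h
      intro Δ hΔ
      exact Multiset.mem_of_mem_erase (Multiset.mem_of_mem_erase hΔ)

lemma tdsIterF_dual (r a : ℤ) : ∀ (k : ℕ) (n : Multiset Seg),
    (∀ Δ ∈ n, Δ.2 + 1 - a ≤ r) → (∀ Δ ∈ n, a ≤ Δ.2) →
    tdsIterF (-a) k (n.map (dphi r)) = (tusIterF a k n).map (dphi r)
  | 0, n, _, _ => rfl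
  | k+1, n, h1, h2 => by
    have hstep := tdsStep_dual r a n h1 h2
    simp only [tdsIterF, tusIterF, hstep]
    cases hts : tusStep n a with
    | none => simp
    | some n' =>
      simp only [Option.map_some]
      exact tdsIterF_dual r a k n'
        (fun Δ hΔ => h1 Δ (tusStep_subset hts Δ hΔ))
        (fun Δ hΔ => h2 Δ (tusStep_subset hts Δ hΔ))

lemma tdsStep_zero (c : ℤ) : tdsStep 0 c = none := by
  unfold tdsStep
  have h : longStart 0 (c+1) = none := by
    rw [longStart_eq_none]; rfl
  rw [h]

lemma tdsIterF_zero (c : ℤ) : ∀ k, tdsIterF c k (0 : Multiset Seg) = 0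
  | 0 => rfl
  | k+1 => by simp only [tdsIterF, tdsStep_zero]

lemma tdsStep_card {c : ℤ} {n n' : Multiset Seg} (h : tdsStep n c = some n') :
    n'.card < n.card := by
  unfold tdsStep at h
  split at h
  · exact absurd h (by simp)
  rename_i Δ'' hl
  split at h
  · exact absurd h (by simp)
  rename_i y hy
  rw [Option.some_inj] at h
  subst h
  have hmem : (c, y) ∈ n := by
    obtain ⟨Δ₀, hΔ₀, hy2⟩ := Multiset.mem_map.mp (mem_of_msetMax hy)
    rw [Multiset.mem_filter] at hΔ₀
    have h0 := hΔ₀.1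
    simp only [startAt, Multiset.mem_filter] at h0
    have hΔ₀e : Δ₀ = (c, y) := by rw [Prod.ext_iff]; exact ⟨h0.2, hy2⟩
    rw [← hΔ₀e]; exact h0.1
  have hc1 : ((n.erase (c,y)).erase Δ'').card ≤ (n.erase (c,y)).card :=
    Multiset.card_erase_le
  have hc3 : 0 < n.card := Multiset.card_pos.mpr fun h0 => by
    rw [h0] at hmem; exact absurd hmem (Multiset.notMem_zero _)
  have hc2 : (n.erase (c,y)).card + 1 = n.card := by
    rw [Multiset.card_erase_of_mem hmem]
    exact Nat.succ_pred_eq_of_pos hc3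
  omega

lemma tdsIterF_fuel (c : ℤ) : ∀ (k j : ℕ) (n : Multiset Seg), n.card ≤ k → n.card ≤ j →
    tdsIterF c k n = tdsIterF c j n
  | 0, j, n, hk, _ => by
    have h0 : n = 0 := Multiset.card_eq_zero.mp (Nat.le_zero.mp hk)
    subst h0
    rw [tdsIterF_zero, tdsIterF_zero]
  | k+1, 0, n, _, hj => by
    have h0 : n = 0 := Multiset.card_eq_zero.mp (Nat.le_zero.mp hj)
    subst h0
    rw [tdsIterF_zero, tdsIterF_zero]
  | k+1, j+1, n, hk, hj => by
    simp only [tdsIterF]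
    cases hts : tdsStep n c with
    | none => rfl
    | some n' =>
      have hlt := tdsStep_card hts
      exact tdsIterF_fuel c k j n' (by omega) (by omega)

lemma tdsStep_cons (c : ℤ) (e : Seg) (n : Multiset Seg) (h1 : e.1 ≠ c) (h2 : e.1 ≠ c + 1) :
    tdsStep (e ::ₘ n) c = (tdsStep n c).map (e ::ₘ ·) := by
  have hs1 : startAt (e ::ₘ n) c = startAt n c := by
    simp only [startAt]; exact Multiset.filter_cons_of_neg _ h1
  have hs2 : startAt (e ::ₘ n) (c+1) = startAt n (c+1) := by
    simp only [startAt]; exact Multiset.filter_cons_of_neg _ h2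
  unfold tdsStep longStart
  rw [hs2, hs1]
  cases hmx : msetMax ((startAt n (c+1)).map Prod.snd) with
  | none => rfl
  | some y'' =>
    simp only [Option.map_some]
    cases hy : msetMax (((startAt n c).filter fun Δ => Prec Δ (c+1, y'')).map Prod.snd) with
    | none => rfl
    | some y =>
      simp only [Option.map_some]
      congr 1
      rw [Multiset.erase_cons_tail _ (fun hc => h1 (by rw [hc]))]
      rw [Multiset.erase_cons_tail _ (fun hc => h2 (by rw [hc]))]

lemma tdsIterF_cons (c : ℤ) (e : Seg) (h1 : e.1 ≠ c) (h2 : e.1 ≠ c + 1) :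
    ∀ (k : ℕ) (n : Multiset Seg), tdsIterF c k (e ::ₘ n) = e ::ₘ tdsIterF c k n
  | 0, n => rfl
  | k+1, n => by
    simp only [tdsIterF, tdsStep_cons c e n h1 h2]
    cases tdsStep n c with
    | none => rfl
    | some n' => exact tdsIterF_cons c e h1 h2 k n'

lemma tusIterF_subset (a : ℤ) : ∀ (k : ℕ) (n : Multiset Seg), ∀ Δ ∈ tusIterF a k n, Δ ∈ n
  | 0, n => fun _ h => h
  | k+1, n => by
    simp only [tusIterF]
    cases hts : tusStep n a with
    | none => exact fun _ h => h
    | some n' => exact fun Δ h => tusStep_subset hts Δ (tusIterF_subset a k n' Δ h)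

lemma irho_card_iff (a : ℤ) {m : Multiset Seg} (hm : IsMS m) :
    (Irho a m).card = m.card ↔ startAt (tusIter a m) (a+1) ≠ 0 := by
  unfold Irho
  cases hl : longStart (tusIter a m) (a + 1) with
  | none =>
    rw [longStart_eq_none] at hl
    rw [hl]
    simp
  | some Δ =>
    obtain ⟨hmem', h1'⟩ := longStart_mem hl
    have hmemm : Δ ∈ m := tusIterF_subset a _ m Δ hmem'
    have ha2 : a ≤ Δ.2 := by have := hm Δ hmemm; omega
    have hne : startAt (tusIter a m) (a+1) ≠ 0 := by
      intro h0
      have hmem2 : Δ ∈ startAt (tusIter a m) (a+1) := by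
        simp only [startAt, Multiset.mem_filter]; exact ⟨hmem', h1'⟩
      rw [h0] at hmem2
      exact absurd hmem2 (Multiset.notMem_zero _)
    have hpos : 0 < m.card := Multiset.card_pos.mpr fun h0 => by
      rw [h0] at hmemm; exact absurd hmemm (Multiset.notMem_zero _)
    have hcard : (pushSeg (m.erase Δ) a Δ.2).card = m.card := by
      rw [pushSeg, if_pos ha2, Multiset.card_add, Multiset.card_singleton,
        Multiset.card_erase_of_mem hmemm]
      exact Nat.succ_pred_eq_of_pos hpos
    simp [hcard, hne]

lemma drho_ne_none_iff {c : ℤ} {n : Multiset Seg} :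
    Drho c n ≠ none ↔ startAt (tdsIter c n) c ≠ 0 := by
  unfold Drho
  rw [Ne, Option.map_eq_none_iff, shortStart_eq_none]

end Stmt8Aux

/-- for `b > a`, `m` in good range for `[a,b]` and all sufficiently
large `r > 0`: `|ℐ_{[a]}(m)| = |m|` iff `𝒟^{Lang,L}_{[a]}(𝔻_r(m)) ≠ ∞` iff
`𝒟^{Lang,L}_{[a]}(𝔻_r^{[a,b]}(m)) ≠ ∞`. -/
theorem stmt8 (m : Multiset Seg) (hm : IsMS m) (a b : ℤ) (hab : a < b)
    (hgr : GoodRange m a b) :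
    ∃ R : ℤ, 0 < R ∧ ∀ r : ℤ, R ≤ r →
      (((Irho a m).card = m.card ↔ DrhoL a (Dual r m) ≠ none) ∧
        (DrhoL a (Dual r m) ≠ none ↔ DrhoL a (DualAB r a b m) ≠ none)) := by
  refine ⟨1 + ((m.map fun Δ => (Δ.2 + 1 - a).toNat).sum : ℕ), by positivity, ?_⟩
  intro r hr
  have hbound : ∀ Δ ∈ m, Δ.2 + 1 - a ≤ r := by
    intro Δ hΔ
    have h1 : (Δ.2 + 1 - a) ≤ ((Δ.2 + 1 - a).toNat : ℤ) := Int.self_le_toNat _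
    have h2 : (Δ.2 + 1 - a).toNat ≤ (m.map fun Δ => (Δ.2 + 1 - a).toNat).sum := by
      obtain ⟨t, ht⟩ := Multiset.exists_cons_of_mem
        (Multiset.mem_map_of_mem (fun Δ : Seg => (Δ.2 + 1 - a).toNat) hΔ)
      rw [ht, Multiset.sum_cons]
      exact Nat.le_add_right _ _
    have h2' : (((Δ.2 + 1 - a).toNat : ℤ)) ≤ (((m.map fun Δ => (Δ.2 + 1 - a).toNat).sum : ℕ) : ℤ) :=
      Int.ofNat_le.mpr h2
    omega
  have hge : ∀ Δ ∈ m, a ≤ Δ.2 := by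
    intro Δ hΔ
    have hgr' : m.filter (fun Δ : Seg => a ≤ Δ.1 ∧ Δ.1 ≤ b + 1 ∧ b ≤ Δ.2) = m := hgr
    have := (Multiset.filter_eq_self.mp hgr') Δ hΔ
    omega
  have hiter : tdsIter (-a) (m.map (dphi r)) = (tusIter a m).map (dphi r) := by
    unfold tdsIter tusIter
    rw [Multiset.card_map]
    exact tdsIterF_dual r a m.card m hbound hge
  have hDrho : Drho (-a) (m.map (dphi r)) ≠ none ↔ startAt (tusIter a m) (a+1) ≠ 0 := by
    rw [drho_ne_none_iff, hiter, startAt_map_dphi]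
    have h1a : (1 : ℤ) - -a = a + 1 := by ring
    rw [h1a, Ne, Ne, Multiset.map_eq_zero]
  have hL1 : DrhoL a (Dual r m) ≠ none ↔ startAt (tusIter a m) (a+1) ≠ 0 := by
    unfold DrhoL
    rw [Ne, Option.map_eq_none_iff, theta_dual]
    exact hDrho
  have hsplit : Theta (DualAB r a b m) = (-b, -(b - r + 1)) ::ₘ m.map (dphi r) := by
    have h0 : Theta (DualAB r a b m) = Theta (Dual r m) + {(-b, -(b - r + 1))} := by
      unfold DualAB Theta
      rw [Multiset.map_add, Multiset.map_singleton]
    rw [h0, theta_dual, add_comm, Multiset.singleton_add]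
  have he1 : ((-b, -(b - r + 1)) : Seg).1 ≠ -a := by simp; omega
  have he2 : ((-b, -(b - r + 1)) : Seg).1 ≠ -a + 1 := by simp; omega
  have hiter2 : tdsIter (-a) ((-b, -(b - r + 1)) ::ₘ m.map (dphi r))
      = (-b, -(b - r + 1)) ::ₘ tdsIter (-a) (m.map (dphi r)) := by
    unfold tdsIter
    rw [Multiset.card_cons, tdsIterF_cons (-a) _ he1 he2,
      tdsIterF_fuel (-a) ((m.map (dphi r)).card + 1) ((m.map (dphi r)).card) _
        (Nat.le_succ _) (le_refl _)]
  have hL2 : DrhoL a (DualAB r a b m) ≠ none ↔ DrhoL a (Dual r m) ≠ none := by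
    unfold DrhoL
    rw [Ne, Ne, Option.map_eq_none_iff, Option.map_eq_none_iff]
    unfold Drho
    rw [Option.map_eq_none_iff, Option.map_eq_none_iff, shortStart_eq_none, shortStart_eq_none,
      theta_dual, hsplit, hiter2]
    have hsa : startAt ((-b, -(b - r + 1)) ::ₘ tdsIter (-a) (m.map (dphi r))) (-a)
        = startAt (tdsIter (-a) (m.map (dphi r))) (-a) := by
      simp only [startAt]
      exact Multiset.filter_cons_of_neg _ he1
    rw [hsa]
  exact ⟨(irho_card_iff a hm).trans hL1.symm, hL2.symm⟩

end Multiseg
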